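/- For $0 < \tau \leq 4$ and $N \geq \tau + C(\tau)$ where $C(\tau) = \frac{2}{\tau\sqrt{5}}(2+\sqrt{2+9\tau^2})$, we have $q(N-\tau)(1 - q(N-\tau)^2) \geq e^{\tau/N}/N$, where $q(t) = (t-\sqrt{t^2-4})/2$. -/

import Mathlib

noncomputable def q (t : ℝ) : ℝ := (t - Real.sqrt (t ^ 2 - 4)) / 2

noncomputable def u : ℕ → ℝ → ℝ
  | 0, _ => 1
  | 1, x => x
  | (n + 2), x => x * u (n + 1) x - u n x

lemma quad_aux (τ b s5 r2 t P : ℝ) (hτ0 : 0 < τ)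
    (hb0 : 0 ≤ b) (hb2 : b ^ 2 = 2 + 9 * τ ^ 2)
    (hs52 : s5 ^ 2 = 5) (hs5l : 2.23 ≤ s5) (hs5u : s5 ≤ 2.24)
    (hr22 : r2 ^ 2 = 2) (hr2l : 1.41 ≤ r2) (hr2u : r2 ≤ 1.42)
    (hPs5 : P * s5 = 4 + 2 * b) (hPle : P ≤ τ * t) :
    r2 * (t + τ) ≤ τ * (t ^ 2 - 4) := by
  have hs5pos : (0:ℝ) < s5 := by linarith
  have hP0 : 0 < P := by nlinarith
  have hrP0 : 0 ≤ r2 * P := mul_nonneg (by linarith) hP0.le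
  have h1 : 2.23 * (r2 * P) ≤ s5 * (r2 * P) := mul_le_mul_of_nonneg_right hs5l hrP0
  have h2 : s5 * (r2 * P) = r2 * (4 + 2 * b) := by linear_combination r2 * hPs5
  have h3 : r2 * (4 + 2 * b) ≤ 1.42 * (4 + 2 * b) :=
    mul_le_mul_of_nonneg_right hr2u (by linarith)
  have hP2 : P ^ 2 * 5 = (4 + 2 * b) ^ 2 := by
    linear_combination (P * s5 + 4 + 2 * b) * hPs5 - P ^ 2 * hs52
  have hτb : 9 * τ ^ 2 = b ^ 2 - 2 := by linarith
  have hmul : r2 * τ ^ 2 ≤ 1.42 * τ ^ 2 := mul_le_mul_of_nonneg_right hr2u (sq_nonneg τ)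
  have h13 : 2.23 * (r2 * P) ≤ 1.42 * (4 + 2 * b) := by linarith
  have hbr : r2 * P + (4 + r2) * τ ^ 2 ≤ P ^ 2 := by
    linarith [sq_nonneg b, hb0, h13, hP2, hτb, hmul]
  have hP' : P * s5 ≤ P * 2.24 := mul_le_mul_of_nonneg_left hs5u hP0.le
  have hr2P : r2 ≤ P := by linarith
  have hd : 0 ≤ τ * t - P := by linarith
  have key : τ * (r2 * (t + τ)) ≤ τ * (τ * (t ^ 2 - 4)) := by
    have hprod := mul_nonneg hd (by linarith : (0:ℝ) ≤ τ * t + P - r2)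
    nlinarith [hprod, hbr]
  exact le_of_mul_le_mul_left key hτ0

set_option maxHeartbeats 1000000 in
theorem stmt8 (τ N : ℝ) (hτ0 : 0 < τ) (hτ4 : τ ≤ 4)
    (hN : τ + 2 / (τ * Real.sqrt 5) * (2 + Real.sqrt (2 + 9 * τ ^ 2)) ≤ N) :
    Real.exp (τ / N) / N ≤ q (N - τ) * (1 - q (N - τ) ^ 2) := by
  set t : ℝ := N - τ with htdef
  set b : ℝ := Real.sqrt (2 + 9 * τ ^ 2) with hbdef
  set s5 : ℝ := Real.sqrt 5 with hs5def
  set r2 : ℝ := Real.sqrt 2 with hr2def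
  have hb0 : 0 ≤ b := Real.sqrt_nonneg _
  have hb2 : b ^ 2 = 2 + 9 * τ ^ 2 := Real.sq_sqrt (by positivity)
  have hb3 : 3 * τ ≤ b := by
    rw [hbdef]
    rw [show (3:ℝ) * τ = Real.sqrt ((3*τ)^2) from (Real.sqrt_sq (by positivity)).symm]
    exact Real.sqrt_le_sqrt (by nlinarith)
  have hs52 : s5 ^ 2 = 5 := Real.sq_sqrt (by norm_num)
  have hs5l : 2.23 ≤ s5 := by nlinarith [Real.sqrt_nonneg (5:ℝ)]
  have hs5u : s5 ≤ 2.24 := by nlinarith [Real.sqrt_nonneg (5:ℝ)]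
  have hr22 : r2 ^ 2 = 2 := Real.sq_sqrt (by norm_num)
  have hr2l : 1.41 ≤ r2 := by nlinarith [Real.sqrt_nonneg (2:ℝ)]
  have hr2u : r2 ≤ 1.42 := by nlinarith [Real.sqrt_nonneg (2:ℝ)]
  have hs5pos : 0 < s5 := by linarith
  -- C : the constant
  have hC : τ + 2 / (τ * s5) * (2 + b) ≤ N := hN
  have hCt : 2 / (τ * s5) * (2 + b) ≤ t := by rw [htdef]; linarith
  have hCval : (2 / (τ * s5) * (2 + b)) * (τ * s5) = 4 + 2 * b := by
    field_simp; ring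
  have hτs5 : 0 < τ * s5 := by positivity
  -- t > 2
  have ht2 : 2 < t := by
    have h1 : 2 / (τ * s5) * (2 + b) ≥ 2 / (τ * s5) * (2 + 3 * τ) := by
      apply mul_le_mul_of_nonneg_left (by linarith) (by positivity)
    have h2 : 2 / (τ * s5) * (2 + 3 * τ) = 4 / (τ * s5) + 6 / s5 := by
      field_simp; ring
    have h3 : (6:ℝ) / s5 > 2 := by
      rw [gt_iff_lt, lt_div_iff₀ hs5pos]; nlinarith
    have h4 : (4:ℝ) / (τ * s5) > 0 := by positivity
    linarith
  have ht0 : 0 < t := by linarith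
  have hN0 : 0 < N := by rw [htdef] at ht0; linarith
  -- s and q
  set s : ℝ := Real.sqrt (t ^ 2 - 4) with hsdef
  have hs0 : 0 ≤ s := Real.sqrt_nonneg _
  have hs2 : s ^ 2 = t ^ 2 - 4 := Real.sq_sqrt (by nlinarith)
  have hst : s < t := by nlinarith
  have hq : q t = (t - s) / 2 := rfl
  set Q : ℝ := (t - s) / 2 with hQdef
  have hQ0 : 0 < Q := by rw [hQdef]; linarith
  have hQts : Q * (t + s) = 2 := by
    have e : Q * (t + s) = (t ^ 2 - s ^ 2) / 2 := by rw [hQdef]; ring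
    rw [e, hs2]; ring
  have hQt : t * Q = 1 + Q ^ 2 := by nlinarith
  -- q^2 * (t^2 - 4) ≤ 1
  have hq2 : Q ^ 2 * (t ^ 2 - 4) ≤ 1 := by
    have hst' : t ^ 2 - 4 ≤ s * t := by nlinarith
    have hQts_t : Q * (t + s) * t = 2 * t := by rw [hQts]
    have h1 : Q * (2 * t ^ 2 - 4) ≤ 2 * t := by
      nlinarith [mul_le_mul_of_nonneg_left hst' hQ0.le]
    have h2 : (0:ℝ) < 2 * t ^ 2 - 4 := by nlinarith
    have h4 := mul_le_mul h1 h1 (mul_nonneg hQ0.le h2.le) (by linarith : (0:ℝ) ≤ 2 * t)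
    have h5 : 4 * t ^ 2 * (Q ^ 2 * (t ^ 2 - 4)) ≤ 4 * t ^ 2 * 1 := by
      nlinarith [h4, sq_nonneg Q]
    exact le_of_mul_le_mul_left h5 (by positivity)
  -- quadratic: τ * (t^2 - 4) ≥ r2 * (t + τ)
  have hquad : r2 * (t + τ) ≤ τ * (t ^ 2 - 4) := by
    apply quad_aux τ b s5 r2 t (τ * (2 / (τ * s5) * (2 + b))) hτ0 hb0 hb2 hs52 hs5l hs5u hr22 hr2l hr2u
    · field_simp; ring
    · exact mul_le_mul_of_nonneg_left hCt hτ0.le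
  -- q^4 ≤ τ^2 / (2 N^2) : as 2 * N^2 * Q^4 ≤ τ^2
  have hq4 : 2 * N ^ 2 * Q ^ 4 ≤ τ ^ 2 := by
    have h1 : r2 * N ≤ τ * (t ^ 2 - 4) := by
      have : N = t + τ := by rw [htdef]; ring
      rw [this]; exact hquad
    have hr2N : 0 ≤ r2 * N := mul_nonneg (by linarith) hN0.le
    have h1sq := mul_le_mul h1 h1 hr2N (le_trans hr2N h1)
    have e : r2 * N * (r2 * N) = 2 * N ^ 2 := by linear_combination N ^ 2 * hr22
    have h2 : 2 * N ^ 2 ≤ τ ^ 2 * (t ^ 2 - 4) ^ 2 := by linarith [h1sq, e]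
    have ht4 : (0:ℝ) ≤ t ^ 2 - 4 := by
      linarith [mul_pos (show (0:ℝ) < t - 2 by linarith) (show (0:ℝ) < t + 2 by linarith)]
    have hq2nn : 0 ≤ Q ^ 2 * (t ^ 2 - 4) := mul_nonneg (sq_nonneg Q) ht4
    have h3sq := mul_le_mul hq2 hq2 hq2nn (by norm_num : (0:ℝ) ≤ 1)
    have h3 : Q ^ 4 * (t ^ 2 - 4) ^ 2 ≤ 1 := by linarith [h3sq]
    have ha := mul_le_mul_of_nonneg_right h2 (pow_nonneg hQ0.le 4)
    have hb' := mul_le_mul_of_nonneg_left h3 (sq_nonneg τ)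
    linarith [ha, hb']
  -- exp bound
  set x : ℝ := τ / N with hxdef
  have hx0 : 0 < x := by positivity
  have hxN : x * N = τ := by rw [hxdef]; field_simp
  have hx1 : x < 1 := by rw [hxdef, div_lt_one hN0, htdef] at *; linarith
  have hexp : Real.exp x ≤ 1 + x + x ^ 2 / 2 + 2 / 9 * x ^ 3 := by
    have := Real.exp_bound' (le_of_lt hx0) (le_of_lt hx1) (n := 3) (by norm_num)
    simp [Finset.sum_range_succ, Nat.factorial] at this
    convert this using 1
    norm_num
    ring
  -- finish
  show Real.exp x / N ≤ Q * (1 - Q ^ 2)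
  rw [div_le_iff₀ hN0]
  have hid : t * (Q * (1 - Q ^ 2)) = 1 - Q ^ 4 := by linear_combination (1 - Q ^ 2) * hQt
  have hq4x : Q ^ 4 * 2 ≤ x ^ 2 := by
    have e2 : τ ^ 2 = x ^ 2 * N ^ 2 := by linear_combination -(τ + x * N) * hxN
    have h : N ^ 2 * (Q ^ 4 * 2) ≤ N ^ 2 * x ^ 2 := by linarith
    exact le_of_mul_le_mul_left h (by positivity)
  have hkey : Real.exp x * t ≤ (1 - Q ^ 4) * N := by
    have h5 : Real.exp x * t ≤ (1 + x + x ^ 2 / 2 + 2 / 9 * x ^ 3) * (N * (1 - x)) := by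
      have htx : t = N * (1 - x) := by rw [htdef]; linear_combination hxN
      rw [htx]
      exact mul_le_mul_of_nonneg_right hexp (mul_nonneg hN0.le (by linarith))
    have h6 : (1 + x + x ^ 2 / 2 + 2 / 9 * x ^ 3) * (1 - x) ≤ 1 - x ^ 2 / 2 := by
      linarith [pow_pos hx0 3, pow_pos hx0 4]
    have h7 : 1 - x ^ 2 / 2 ≤ 1 - Q ^ 4 := by linarith
    have h8 := mul_le_mul_of_nonneg_right h6 hN0.le
    have h9 := mul_le_mul_of_nonneg_right h7 hN0.le
    have e : (1 + x + x ^ 2 / 2 + 2 / 9 * x ^ 3) * (N * (1 - x)) =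
        (1 + x + x ^ 2 / 2 + 2 / 9 * x ^ 3) * (1 - x) * N := by ring
    exact h5.trans (by rw [e]; exact le_trans h8 h9)
  calc Real.exp x ≤ Real.exp x * t / t := by rw [mul_div_assoc, div_self (ne_of_gt ht0), mul_one]
    _ ≤ (1 - Q ^ 4) * N / t := by apply div_le_div_of_nonneg_right ?_ ht0.le; exact hkey
    _ = Q * (1 - Q ^ 2) * N := by rw [← hid]; field_simp
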